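/- Let T and T' be triangles in ℝ² (convex hulls of affinely independent triples of points) such that T is not an image of T' under a map of the form z ↦ s·z + t with s ∈ {1, −1} and t ∈ ℝ² (i.e., T ≄ T'). For δ ∈ ℝ let M_δ : ℝ² → ℝ² be the shear M_δ(x, y) = (x + δy, y). Then the set { δ ∈ ℝ : M_δ(T) is congruent to M_δ(T') } is finite. -/

import Mathlib

open MeasureTheory

noncomputable section

/-- The Euclidean plane. -/
abbrev Plane : Type := EuclideanSpace ℝ (Fin 2)

/-- A triangle is the convex hull of three affinely independent points. -/
def IsTriangle (T : Set Plane) : Prop :=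
  ∃ p q r : Plane, AffineIndependent ℝ ![p, q, r] ∧ T = convexHull ℝ {p, q, r}

/-- Two subsets of the plane are congruent if one is the image of the other under
an isometry of the plane (reflections allowed). -/
def PlaneCongruent (A B : Set Plane) : Prop :=
  ∃ f : Plane ≃ᵢ Plane, f '' A = B

/-- A tiling of `A ⊆ ℝ²`: a countable collection of compact sets whose interiors are
pairwise disjoint and whose union is `A`. -/
def IsTilingOf (𝒯 : Set (Set Plane)) (A : Set Plane) : Prop :=
  𝒯.Countable ∧ (∀ T ∈ 𝒯, IsCompact T) ∧
    (∀ T ∈ 𝒯, ∀ T' ∈ 𝒯, T ≠ T' → interior T ∩ interior T' = ∅) ∧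
    ⋃₀ 𝒯 = A

/-- A vertex of a (convex polygonal) tile is an extreme point of it. -/
def IsVertexOf (p : Plane) (T : Set Plane) : Prop := p ∈ Set.extremePoints ℝ T

/-- An edge of a convex polygon: a nondegenerate segment between two vertices that
lies in the frontier of the polygon. -/
def IsEdgeOf (e : Set Plane) (T : Set Plane) : Prop :=
  ∃ u v : Plane, u ≠ v ∧ IsVertexOf u T ∧ IsVertexOf v T ∧
    e = segment ℝ u v ∧ e ⊆ frontier T

/-- A tiling by convex polygons is vertex-to-vertex if the intersection of any two
distinct tiles is empty, a common vertex, or a common entire edge. -/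
def IsVertexToVertex (𝒯 : Set (Set Plane)) : Prop :=
  ∀ T ∈ 𝒯, ∀ T' ∈ 𝒯, T ≠ T' →
    T ∩ T' = ∅ ∨
    (∃ p : Plane, T ∩ T' = {p} ∧ IsVertexOf p T ∧ IsVertexOf p T') ∨
    (IsEdgeOf (T ∩ T') T ∧ IsEdgeOf (T ∩ T') T')

/-- A convex polygon with exactly `n` vertices: a compact convex set whose set of
extreme points is finite with exactly `n` elements. -/
def IsConvexPolygon (n : ℕ) (T : Set Plane) : Prop :=
  IsCompact T ∧ Convex ℝ T ∧ (Set.extremePoints ℝ T).Finite ∧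
    (Set.extremePoints ℝ T).ncard = n

/-- `A ≃ B`: `B` is the image of `A` under `z ↦ s·z + t` with `s ∈ {1, -1}`. -/
def TransCong (A B : Set Plane) : Prop :=
  ∃ s : ℝ, (s = 1 ∨ s = -1) ∧ ∃ t : Plane, B = (fun z => s • z + t) '' A

/-- The shear map `M_δ (x, y) = (x + δy, y)`. -/
def shear (δ : ℝ) (p : Plane) : Plane :=
  (WithLp.equiv 2 (Fin 2 → ℝ)).symm ![p 0 + δ * p 1, p 1]


-- ### Auxiliary lemmas ###

lemma shear_apply0 (δ : ℝ) (p : Plane) : shear δ p 0 = p 0 + δ * p 1 := rfl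
lemma shear_apply1 (δ : ℝ) (p : Plane) : shear δ p 1 = p 1 := rfl

def sqn (δ : ℝ) (u : Plane) : ℝ := (u 0 + δ * u 1)^2 + (u 1)^2

lemma dist_shear_sq (δ : ℝ) (x y : Plane) :
    dist (shear δ x) (shear δ y) ^ 2 = sqn δ (x - y) := by
  rw [EuclideanSpace.dist_eq, Real.sq_sqrt (by positivity)]
  simp only [Fin.sum_univ_two, sqn, shear_apply0, shear_apply1, Real.dist_eq, sq_abs,
    PiLp.sub_apply]
  ring

lemma shear_inj (δ : ℝ) : Function.Injective (shear δ) := by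
  intro x y hxy
  have h0 : shear δ x 0 = shear δ y 0 := by rw [hxy]
  have h1 : shear δ x 1 = shear δ y 1 := by rw [hxy]
  rw [shear_apply0, shear_apply0] at h0
  rw [shear_apply1, shear_apply1] at h1
  ext i
  fin_cases i
  · simpa [h1] using h0
  · exact h1

lemma shear_linear (δ : ℝ) : IsLinearMap ℝ (shear δ) := by
  constructor
  · intro x y; ext i; fin_cases i <;>
      simp [shear_apply0, shear_apply1] <;> ring
  · intro c x; ext i; fin_cases i <;>
      simp [shear_apply0, shear_apply1] <;> ring

open Polynomial in
lemma quad_of_infinite {u w : Plane} (h : {δ : ℝ | sqn δ w = sqn δ u}.Infinite) :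
    w = u ∨ w = -u := by
  set P : ℝ[X] := C (w 0^2 + w 1^2 - u 0^2 - u 1^2) +
      C (2*(w 0 * w 1 - u 0 * u 1)) * X + C (w 1^2 - u 1^2) * X^2 with hP
  have hroot : ∀ δ ∈ {δ : ℝ | sqn δ w = sqn δ u}, P.IsRoot δ := by
    intro δ hδ
    simp only [Set.mem_setOf_eq, sqn] at hδ
    simp only [IsRoot, hP, eval_add, eval_mul, eval_C, eval_X, eval_pow]
    nlinarith [hδ]
  have hP0 : P = 0 := P.eq_zero_of_infinite_isRoot (h.mono hroot)
  have E : ∀ δ : ℝ, (w 0^2 + w 1^2 - u 0^2 - u 1^2) +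
      (2*(w 0 * w 1 - u 0 * u 1))*δ + (w 1^2 - u 1^2)*δ^2 = 0 := by
    intro δ
    have := congrArg (eval δ) hP0
    simpa only [hP, eval_add, eval_mul, eval_C, eval_X, eval_pow, eval_zero] using this
  have E0 := E 0; have E1 := E 1; have E2 := E (-1)
  have e2 : w 1 ^ 2 = u 1 ^ 2 := by nlinarith [E0, E1, E2]
  have e1 : w 0 * w 1 = u 0 * u 1 := by nlinarith [E0, E1, E2]
  have e0 : w 0 ^ 2 = u 0 ^ 2 := by nlinarith [E0, E1, E2]
  have hext : ∀ a b : Plane, a 0 = b 0 → a 1 = b 1 → a = b := by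
    intro a b h0 h1; ext i; fin_cases i <;> assumption
  have hneg : ∀ a : Plane, (-a) 0 = -(a 0) ∧ (-a) 1 = -(a 1) := fun a => ⟨rfl, rfl⟩
  rcases sq_eq_sq_iff_eq_or_eq_neg.mp e2 with h1 | h1 <;>
    rcases sq_eq_sq_iff_eq_or_eq_neg.mp e0 with h0 | h0
  · exact Or.inl (hext _ _ h0 h1)
  · by_cases hu1 : u 1 = 0
    · exact Or.inr (hext _ _ (by rw [h0]; rfl) (by rw [h1, hu1]; simp [PiLp.neg_apply, hu1]))
    · left
      refine hext _ _ ?_ h1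
      rw [h1] at e1
      exact mul_right_cancel₀ hu1 e1
  · by_cases hu1 : u 1 = 0
    · exact Or.inl (hext _ _ h0 (by rw [h1, hu1]; ring))
    · right
      rw [h0, h1] at e1
      have hu0 : u 0 = 0 := by
        rcases mul_eq_zero.mp (show u 0 * u 1 = 0 by nlinarith [e1]) with h | h
        · exact h
        · exact absurd h hu1
      refine hext _ _ ?_ (by rw [h1]; rfl)
      rw [h0, hu0]
      simp [PiLp.neg_apply, hu0]
  · exact Or.inr (hext _ _ (by rw [h0]; rfl) (by rw [h1]; rfl))

lemma indep_pair {p q r : Plane} (h : AffineIndependent ℝ ![p, q, r]) :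
    ∀ b c : ℝ, b • (q - p) + c • (r - p) = 0 → b = 0 ∧ c = 0 := by
  intro b c hbc
  rw [affineIndependent_iff] at h
  have key := h Finset.univ ![-(b + c), b, c]
    (by simp [Fin.sum_univ_three])
    (by
      simp only [Fin.sum_univ_three, Matrix.cons_val_zero, Matrix.cons_val_one, Matrix.head_cons,
        Matrix.cons_val_two, Matrix.tail_cons]
      have expand : (-(b+c)) • p + b • q + c • r = b • (q - p) + c • (r - p) := by module
      rw [expand, hbc])
  constructor
  · simpa using key 1 (Finset.mem_univ _)
  · simpa using key 2 (Finset.mem_univ _)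

lemma mem_hull_iff {p q r x : Plane} :
    x ∈ convexHull ℝ ({p, q, r} : Set Plane) ↔
      ∃ a b c : ℝ, 0 ≤ a ∧ 0 ≤ b ∧ 0 ≤ c ∧ a + b + c = 1 ∧ x = a • p + b • q + c • r := by
  constructor
  · intro hx
    have hsub : convexHull ℝ ({p, q, r} : Set Plane) ⊆
        {x | ∃ a b c : ℝ, 0 ≤ a ∧ 0 ≤ b ∧ 0 ≤ c ∧ a + b + c = 1 ∧ x = a • p + b • q + c • r} := by
      apply convexHull_min
      · intro y hy
        rcases hy with rfl | rfl | rfl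
        · exact ⟨1, 0, 0, by norm_num, by norm_num, by norm_num, by ring, by simp⟩
        · exact ⟨0, 1, 0, by norm_num, by norm_num, by norm_num, by ring, by simp⟩
        · exact ⟨0, 0, 1, by norm_num, by norm_num, by norm_num, by ring, by simp⟩
      · rintro x ⟨a1, b1, c1, ha1, hb1, hc1, hs1, rfl⟩ y ⟨a2, b2, c2, ha2, hb2, hc2, hs2, rfl⟩
          u v hu hv huv
        refine ⟨u*a1 + v*a2, u*b1 + v*b2, u*c1 + v*c2, by positivity, by positivity, by positivity,
          by nlinarith, by module⟩
    exact hsub hx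
  · rintro ⟨a, b, c, ha, hb, hc, hs, rfl⟩
    exact mem_convexHull_of_exists_fintype (ι := Fin 3) ![a, b, c] ![p, q, r]
      (by intro i; fin_cases i <;> simpa)
      (by simp [Fin.sum_univ_three, hs])
      (by intro i; fin_cases i <;> simp)
      (by simp [Fin.sum_univ_three])

lemma vertex_extreme {p q r : Plane} (h : AffineIndependent ℝ ![p, q, r]) :
    p ∈ Set.extremePoints ℝ (convexHull ℝ ({p, q, r} : Set Plane)) := by
  rw [mem_extremePoints_iff_forall_segment]
  refine ⟨subset_convexHull ℝ _ (by simp), ?_⟩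
  intro x hx y hy hseg
  obtain ⟨a1, b1, c1, ha1, hb1, hc1, hs1, hx'⟩ := mem_hull_iff.mp hx
  obtain ⟨a2, b2, c2, ha2, hb2, hc2, hs2, hy'⟩ := mem_hull_iff.mp hy
  obtain ⟨u, v, hu, hv, huv, hxy⟩ := hseg
  have step : u • x + v • y = (u*a1 + v*a2) • p + (u*b1 + v*b2) • q + (u*c1 + v*c2) • r := by
    rw [hx', hy']; module
  have hcomb : p = (u*a1 + v*a2) • p + (u*b1 + v*b2) • q + (u*c1 + v*c2) • r :=
    (step.symm.trans hxy).symm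
  have h1 : (u*a1 + v*a2) + (u*b1 + v*b2) + (u*c1 + v*c2) = 1 := by nlinarith
  have hrel : (u*b1 + v*b2) • (q - p) + (u*c1 + v*c2) • (r - p) = 0 := by
    calc (u*b1 + v*b2) • (q - p) + (u*c1 + v*c2) • (r - p)
        = ((u*a1 + v*a2) • p + (u*b1 + v*b2) • q + (u*c1 + v*c2) • r)
          - ((u*a1 + v*a2) + (u*b1 + v*b2) + (u*c1 + v*c2)) • p := by module
      _ = p - (1:ℝ) • p := by rw [← hcomb, h1]
      _ = 0 := by simp
  obtain ⟨hB, hC⟩ := indep_pair h _ _ hrel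
  by_cases hu0 : u = 0
  · right
    have hv1 : v = 1 := by linarith
    rw [hu0, hv1] at hxy
    simpa using hxy
  · left
    have hub1 : u * b1 = 0 := by linarith [mul_nonneg hu hb1, mul_nonneg hv hb2]
    have huc1 : u * c1 = 0 := by linarith [mul_nonneg hu hc1, mul_nonneg hv hc2]
    have hb10 : b1 = 0 := by
      rcases mul_eq_zero.mp hub1 with h' | h'
      · exact absurd h' hu0
      · exact h'
    have hc10 : c1 = 0 := by
      rcases mul_eq_zero.mp huc1 with h' | h'
      · exact absurd h' hu0
      · exact h'
    have ha11 : a1 = 1 := by linarith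
    rw [hx', hb10, hc10, ha11]
    simp

lemma indep_swap01 {p q r : Plane} (h : AffineIndependent ℝ ![p, q, r]) :
    AffineIndependent ℝ ![q, p, r] := by
  have := (affineIndependent_equiv (Equiv.swap (0 : Fin 3) 1)).mpr h
  convert this using 1
  funext i
  fin_cases i <;> simp [Equiv.swap_apply_def] <;> rfl

lemma indep_swap02 {p q r : Plane} (h : AffineIndependent ℝ ![p, q, r]) :
    AffineIndependent ℝ ![r, q, p] := by
  have := (affineIndependent_equiv (Equiv.swap (0 : Fin 3) 2)).mpr h
  convert this using 1
  funext i
  fin_cases i <;> simp [Equiv.swap_apply_def] <;> rfl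

lemma vertices_extreme {p q r : Plane} (h : AffineIndependent ℝ ![p, q, r]) :
    ({p, q, r} : Set Plane) ⊆ Set.extremePoints ℝ (convexHull ℝ ({p, q, r} : Set Plane)) := by
  intro x hx
  rcases hx with rfl | rfl | rfl
  · exact vertex_extreme h
  · have := vertex_extreme (indep_swap01 h)
    have hset : ({x, p, r} : Set Plane) = {p, x, r} := by
      ext z; simp; tauto
    rwa [hset] at this
  · have := vertex_extreme (indep_swap02 h)
    have hset : ({x, q, p} : Set Plane) = {p, q, x} := by
      ext z; simp; tauto
    rwa [hset] at this

lemma vertexset_eq {a b c a' b' c' : Plane} (h : AffineIndependent ℝ ![a, b, c])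
    (h' : AffineIndependent ℝ ![a', b', c'])
    (he : convexHull ℝ ({a, b, c} : Set Plane) = convexHull ℝ ({a', b', c'} : Set Plane)) :
    ({a, b, c} : Set Plane) = {a', b', c'} := by
  apply Set.Subset.antisymm
  · intro x hx
    have hex := vertices_extreme h hx
    rw [he] at hex
    exact extremePoints_convexHull_subset hex
  · intro x hx
    have hex := vertices_extreme h' hx
    rw [← he] at hex
    exact extremePoints_convexHull_subset hex

/-- If `T ≄ T'` are triangles, then `M_δ(T) ≅ M_δ(T')` for only finitely many `δ`. -/
theorem statement16 (T T' : Set Plane) (hT : IsTriangle T) (hT' : IsTriangle T')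
    (h : ¬ TransCong T T') :
    {δ : ℝ | PlaneCongruent (shear δ '' T) (shear δ '' T')}.Finite := by
  obtain ⟨p, q, r, hind, rfl⟩ := hT
  obtain ⟨p', q', r', hind', rfl⟩ := hT'
  set v : Fin 3 → Plane := ![p, q, r] with hv
  set v' : Fin 3 → Plane := ![p', q', r'] with hv'
  have hv0 : v 0 = p := rfl
  have hv1 : v 1 = q := rfl
  have hv2 : v 2 = r := rfl
  set S : Equiv.Perm (Fin 3) → Set ℝ := fun σ =>
    {δ | ∀ i j : Fin 3, sqn δ (v' (σ i) - v' (σ j)) = sqn δ (v i - v j)} with hS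
  -- step A : subset of the union
  have hsubset : {δ : ℝ | PlaneCongruent (shear δ '' convexHull ℝ {p, q, r})
      (shear δ '' convexHull ℝ {p', q', r'})} ⊆ ⋃ σ : Equiv.Perm (Fin 3), S σ := by
    intro δ hδ
    obtain ⟨f, hf⟩ := hδ
    -- the isometry as an affine map
    set F : Plane →ᵃ[ℝ] Plane := f.toRealAffineIsometryEquiv.toAffineEquiv.toAffineMap with hF
    have hFcoe : ⇑F = ⇑f := rfl
    have hFinj : Function.Injective F := by
      rw [hFcoe]; exact f.injective
    set G : Plane →ᵃ[ℝ] Plane := (IsLinearMap.mk' (shear δ) (shear_linear δ)).toAffineMap with hG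
    have hGcoe : ⇑G = shear δ := rfl
    set Φ : Plane →ᵃ[ℝ] Plane := F.comp G with hΦ
    have hΦcoe : ⇑Φ = f ∘ shear δ := rfl
    have hΦinj : Function.Injective Φ := by
      rw [hΦcoe]; exact f.injective.comp (shear_inj δ)
    -- image computation
    have him : convexHull ℝ ((f ∘ shear δ) '' {p, q, r}) =
        convexHull ℝ (shear δ '' {p', q', r'}) := by
      have h1 : shear δ '' convexHull ℝ {p, q, r} = convexHull ℝ (shear δ '' {p, q, r}) := by
        rw [← hGcoe]; exact G.image_convexHull _
      have h2 : shear δ '' convexHull ℝ {p', q', r'} = convexHull ℝ (shear δ '' {p', q', r'}) := by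
        rw [← hGcoe]; exact G.image_convexHull _
      have h3 : f '' convexHull ℝ (shear δ '' {p, q, r}) =
          convexHull ℝ (f '' (shear δ '' {p, q, r})) := by
        rw [← hFcoe]; exact F.image_convexHull _
      rw [Set.image_comp, ← h3, ← h1, hf, h2]
    have htriple : ((f ∘ shear δ) '' {p, q, r} : Set Plane) =
        {(f ∘ shear δ) p, (f ∘ shear δ) q, (f ∘ shear δ) r} := by
      rw [Set.image_insert_eq, Set.image_insert_eq, Set.image_singleton]
    have htriple' : (shear δ '' {p', q', r'} : Set Plane) =
        {shear δ p', shear δ q', shear δ r'} := by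
      rw [Set.image_insert_eq, Set.image_insert_eq, Set.image_singleton]
    -- affine independence of images
    have hindΦ : AffineIndependent ℝ ![(f ∘ shear δ) p, (f ∘ shear δ) q, (f ∘ shear δ) r] := by
      have : AffineIndependent ℝ (Φ ∘ ![p, q, r]) :=
        (Φ.affineIndependent_iff hΦinj).mpr hind
      convert this using 1
      funext i; fin_cases i <;> rfl
    have hindG' : AffineIndependent ℝ ![shear δ p', shear δ q', shear δ r'] := by
      have hGinj : Function.Injective G := by rw [hGcoe]; exact shear_inj δ
      have : AffineIndependent ℝ (G ∘ ![p', q', r']) :=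
        (G.affineIndependent_iff hGinj).mpr hind'
      convert this using 1
      funext i; fin_cases i <;> rfl
    have hsets : ({(f ∘ shear δ) p, (f ∘ shear δ) q, (f ∘ shear δ) r} : Set Plane) =
        {shear δ p', shear δ q', shear δ r'} := by
      apply vertexset_eq hindΦ hindG'
      rw [← htriple, ← htriple', him]
    -- choose the permutation
    have hex : ∀ i : Fin 3, ∃ j : Fin 3, shear δ (v' j) = (f ∘ shear δ) (v i) := by
      intro i
      have hm : (f ∘ shear δ) (v i) ∈
          ({shear δ p', shear δ q', shear δ r'} : Set Plane) := by
        rw [← hsets]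
        fin_cases i
        · exact Set.mem_insert _ _
        · exact Set.mem_insert_of_mem _ (Set.mem_insert _ _)
        · exact Set.mem_insert_of_mem _ (Set.mem_insert_of_mem _ rfl)
      rcases hm with hm | hm | hm
      · exact ⟨0, hm.symm⟩
      · exact ⟨1, hm.symm⟩
      · exact ⟨2, hm.symm⟩
    choose g hg using hex
    have hvinj : Function.Injective v := hind.injective
    have hginj : Function.Injective g := by
      intro i1 i2 h12
      have e1 := hg i1
      have e2 := hg i2
      rw [h12] at e1
      have : (f ∘ shear δ) (v i1) = (f ∘ shear δ) (v i2) := by rw [← e1, ← e2]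
      have : shear δ (v i1) = shear δ (v i2) := f.injective this
      exact hvinj (shear_inj δ this)
    set σ : Equiv.Perm (Fin 3) := Equiv.ofBijective g (Finite.injective_iff_bijective.mp hginj)
      with hσ
    have hσg : ∀ i, σ i = g i := fun i => rfl
    refine Set.mem_iUnion.mpr ⟨σ, ?_⟩
    intro i j
    have key : dist (shear δ (v' (σ i))) (shear δ (v' (σ j))) =
        dist (shear δ (v i)) (shear δ (v j)) := by
      rw [hσg, hσg, hg i, hg j]
      exact f.dist_eq _ _
    have := congrArg (fun x : ℝ => x ^ 2) key
    simpa only [dist_shear_sq] using this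
  -- step B : each S σ is finite
  have hSfin : ∀ σ : Equiv.Perm (Fin 3), (S σ).Finite := by
    intro σ
    by_contra hfin
    have hinf : (S σ).Infinite := hfin
    have pair : ∀ i j : Fin 3,
        v' (σ i) - v' (σ j) = v i - v j ∨ v' (σ i) - v' (σ j) = -(v i - v j) := by
      intro i j
      apply quad_of_infinite
      apply hinf.mono
      intro δ hδ
      exact hδ i j
    have pack : ∀ X Y : Plane, X = Y ∨ X = -Y → ∃ e : ℝ, (e = 1 ∨ e = -1) ∧ X = e • Y := by
      rintro X Y (rfl | rfl)
      · exact ⟨1, Or.inl rfl, (one_smul _ _).symm⟩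
      · exact ⟨-1, Or.inr rfl, by simp⟩
    obtain ⟨e1, he1, hA⟩ := pack _ _ (pair 1 0)
    obtain ⟨e2, he2, hB⟩ := pack _ _ (pair 2 1)
    obtain ⟨e3, he3, hC⟩ := pack _ _ (pair 2 0)
    -- sign coherence
    have hsum : (v' (σ 1) - v' (σ 0)) + (v' (σ 2) - v' (σ 1)) = v' (σ 2) - v' (σ 0) := by abel
    rw [hA, hB, hC] at hsum
    have key : (e1 - e2) • (v 1 - v 0) + (e2 - e3) • (v 2 - v 0) = 0 := by
      have expand : (e1 - e2) • (v 1 - v 0) + (e2 - e3) • (v 2 - v 0)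
          = (e1 • (v 1 - v 0) + e2 • (v 2 - v 1)) - e3 • (v 2 - v 0) := by module
      rw [expand, hsum, sub_self]
    have hindpqr : AffineIndependent ℝ ![p, q, r] := by
      have h2 := hind; rw [hv] at h2; exact h2
    have keypqr : (e1 - e2) • (q - p) + (e2 - e3) • (r - p) = 0 := by
      rw [← hv0, ← hv1, ← hv2]; exact key
    have hpairs := indep_pair hindpqr (e1 - e2) (e2 - e3) keypqr
    have he12 : e1 = e2 := by have := hpairs.1; linarith
    have he23 : e2 = e3 := by have := hpairs.2; linarith
    have he13 : e1 = e3 := he12.trans he23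
    set s : ℝ := e3 with hs
    set t : Plane := v' (σ 0) - s • v 0 with ht
    have f0 : v' (σ 0) = s • v 0 + t := by rw [ht]; abel
    have f1 : v' (σ 1) = s • v 1 + t := by
      rw [he13] at hA
      rw [ht]
      have : v' (σ 1) = v' (σ 0) + s • (v 1 - v 0) := by
        rw [← hA]; abel
      rw [this]
      module
    have f2 : v' (σ 2) = s • v 2 + t := by
      rw [ht]
      have : v' (σ 2) = v' (σ 0) + s • (v 2 - v 0) := by
        rw [← hC]; abel
      rw [this]
      module
    -- conclude TransCong
    apply h
    refine ⟨s, he3, t, ?_⟩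
    have hmap : ((fun z : Plane => s • z + t) '' convexHull ℝ {p, q, r}) =
        convexHull ℝ ((fun z : Plane => s • z + t) '' {p, q, r}) := by
      set A : Plane →ᵃ[ℝ] Plane :=
        { toFun := fun z => s • z + t
          linear := s • LinearMap.id
          map_vadd' := by
            intro z w
            simp only [LinearMap.smul_apply, LinearMap.id_coe, id_eq, vadd_eq_add]
            module }
      exact A.image_convexHull _
    have himg : ((fun z : Plane => s • z + t) '' {p, q, r} : Set Plane) =
        {s • p + t, s • q + t, s • r + t} := by
      rw [Set.image_insert_eq, Set.image_insert_eq, Set.image_singleton]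
    have hset3 : ({p', q', r'} : Set Plane) = {s • p + t, s • q + t, s • r + t} := by
      have hmem : ∀ j : Fin 3, v' j ∈ ({v' (σ 0), v' (σ 1), v' (σ 2)} : Set Plane) := by
        intro j
        have : j = σ (σ.symm j) := (σ.apply_symm_apply j).symm
        rw [this]
        generalize σ.symm j = k
        fin_cases k
        · exact Set.mem_insert _ _
        · exact Set.mem_insert_of_mem _ (Set.mem_insert _ _)
        · exact Set.mem_insert_of_mem _ (Set.mem_insert_of_mem _ rfl)
      have h1 : ({p', q', r'} : Set Plane) ⊆ {v' (σ 0), v' (σ 1), v' (σ 2)} := by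
        intro x hx
        rcases hx with rfl | rfl | rfl
        · exact hmem 0
        · exact hmem 1
        · exact hmem 2
      have h2 : ({v' (σ 0), v' (σ 1), v' (σ 2)} : Set Plane) ⊆ {p', q', r'} := by
        intro x hx
        rcases hx with rfl | rfl | rfl
        · have : v' (σ 0) ∈ ({p', q', r'} : Set Plane) := by
            generalize σ 0 = k; fin_cases k <;> simp [hv']
          exact this
        · have : v' (σ 1) ∈ ({p', q', r'} : Set Plane) := by
            generalize σ 1 = k; fin_cases k <;> simp [hv']
          exact this
        · have : v' (σ 2) ∈ ({p', q', r'} : Set Plane) := by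
            generalize σ 2 = k; fin_cases k <;> simp [hv']
          exact this
      have heq : ({p', q', r'} : Set Plane) = {v' (σ 0), v' (σ 1), v' (σ 2)} :=
        Set.Subset.antisymm h1 h2
      rw [heq, f0, f1, f2, hv0, hv1, hv2]
    rw [hmap, himg, ← hset3]
  exact Set.Finite.subset (Set.finite_iUnion hSfin) hsubset
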